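/- The operator T_{α,β} is left invertible: T*_{α,β}T_{α,β} is an invertible operator; equivalently, there exists a bounded operator L on H with L T_{α,β} = I, and T_{α,β} is bounded below. -/

import Mathlib

open scoped ComplexConjugate

noncomputable section

/-- The Hilbert space `H = ℓ²(ℕ, ℂ)`. -/
abbrev H : Type := lp (fun _ : ℕ => ℂ) 2

/-- The standard orthonormal basis vectors of `ℓ²(ℕ, ℂ)`. -/
noncomputable def e (n : ℕ) : H := lp.single 2 n (1 : ℂ)

local notation "⟪" x ", " y "⟫" => @inner ℂ H _ x y

lemma e_apply (n m : ℕ) : (e n : ∀ _ : ℕ, ℂ) m = if m = n then 1 else 0 := by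
  by_cases h : m = n
  · subst h; simp [e, lp.single_apply_self]
  · simp [e, lp.single_apply_ne 2 n _ h, h]

lemma coord_eq_inner (f : H) (m : ℕ) : ⟪e m, f⟫ = (f : ∀ _ : ℕ, ℂ) m := by
  rw [e, lp.inner_single_left]; simp [RCLike.inner_apply]

lemma inner_e_e (m n : ℕ) : ⟪e m, e n⟫ = if m = n then 1 else 0 := by
  rw [coord_eq_inner, e_apply]

lemma clm_ext_e {A B : H →L[ℂ] H} (h : ∀ n, A (e n) = B (e n)) : A = B := by
  refine ContinuousLinearMap.ext fun x => ?_
  have hx : HasSum (fun i => lp.single 2 i (x i)) x := lp.hasSum_single ENNReal.ofNat_ne_top x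
  have h1 : HasSum (fun i => A (lp.single 2 i (x i))) (A x) := hx.mapL A
  have h2 : HasSum (fun i => B (lp.single 2 i (x i))) (B x) := hx.mapL B
  refine h1.unique ?_
  have hfun : (fun i => A (lp.single 2 i (x i))) = fun i => B (lp.single 2 i (x i)) := by
    funext i
    have hs : lp.single (E := fun _ : ℕ => ℂ) 2 i (x i) = x i • e i := by
      rw [e, ← lp.single_smul]; norm_num
    rw [hs, map_smul, map_smul, h i]
  rwa [hfun]

/-- `T_{α,β}` is left invertible: `T*T` is invertible, there is a bounded left inverse,
and `T` is bounded below. -/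
theorem T_left_invertible (α β : ℂ) (hα : α ≠ 0) (hβ : β ≠ 0)
    (hnorm : ‖α‖ ^ 2 + ‖β‖ ^ 2 = 1)
    (T : H →L[ℂ] H)
    (hT0 : T (e 0) = (α * conj β) • e 0 + β • e 1)
    (hTn : ∀ n : ℕ, 1 ≤ n → T (e n) = e (n + 1)) :
    IsUnit (ContinuousLinearMap.adjoint T ∘L T) ∧
      (∃ L : H →L[ℂ] H, L ∘L T = ContinuousLinearMap.id ℂ H) ∧
      (∃ c : ℝ, 0 < c ∧ ∀ x : H, c * ‖x‖ ≤ ‖T x‖) := by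
  set a : ℝ := ‖α‖ ^ 2 with ha_def
  set P : H →L[ℂ] H := (innerSL ℂ (e 0)).smulRight (e 0) with hP_def
  have hP : ∀ x : H, P x = ⟪e 0, x⟫ • e 0 := fun x => rfl
  have ha : (starRingEnd ℂ) α * α = (a : ℂ) := by
    rw [mul_comm, Complex.mul_conj, Complex.normSq_eq_norm_sq]
  have hb : (starRingEnd ℂ) β * β = ((‖β‖ ^ 2 : ℝ) : ℂ) := by
    rw [mul_comm, Complex.mul_conj, Complex.normSq_eq_norm_sq]
  have hnorm' : (a : ℂ) + ((‖β‖ ^ 2 : ℝ) : ℂ) = 1 := by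
    rw [ha_def]; exact_mod_cast congrArg (fun r : ℝ => (r : ℂ)) hnorm
  set c : ℂ := ((a : ℂ)) ^ 2 with hc_def
  -- `a < 1` since `β ≠ 0`
  have habs : 0 < ‖β‖ ^ 2 := pow_pos (norm_pos_iff.mpr hβ) 2
  have ha0 : 0 < a := by rw [ha_def]; exact pow_pos (norm_pos_iff.mpr hα) 2
  have ha1 : a < 1 := by nlinarith
  have hc1 : (1 : ℂ) - c ≠ 0 := by
    have hr : (1 : ℝ) - a ^ 2 ≠ 0 := by nlinarith
    intro hcon
    apply hr
    have : ((1 - a ^ 2 : ℝ) : ℂ) = 0 := by push_cast; rw [← hc_def] at *; linear_combination hcon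
    exact_mod_cast this
  set d : ℂ := c / (1 - c) with hd_def
  have hd : d * (1 - c) = c := div_mul_cancel₀ _ hc1
  -- the key identity `T* T = 1 - c • P`
  have key : ContinuousLinearMap.adjoint T ∘L T = ContinuousLinearMap.id ℂ H - c • P := by
    apply clm_ext_e
    intro n
    refine lp.ext (funext fun m => ?_)
    rw [← coord_eq_inner, ← coord_eq_inner]
    rw [ContinuousLinearMap.comp_apply, ContinuousLinearMap.adjoint_inner_right]
    rcases n with _ | n <;> rcases m with _ | m
    · rw [hT0]
      simp only [ContinuousLinearMap.sub_apply, ContinuousLinearMap.smul_apply,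
        ContinuousLinearMap.id_apply, hP, inner_add_left, inner_add_right,
        inner_smul_left, inner_smul_right, inner_sub_right, inner_e_e]
      norm_num
      linear_combination (1 + (a : ℂ)) * hnorm' + ((starRingEnd ℂ) β * β) * ha +
        ((1 : ℂ) + (a : ℂ)) * hb
    · rw [hT0, hTn (m + 1) (by omega)]
      simp only [ContinuousLinearMap.sub_apply, ContinuousLinearMap.smul_apply,
        ContinuousLinearMap.id_apply, hP, inner_add_left, inner_add_right,
        inner_smul_left, inner_smul_right, inner_sub_right, inner_e_e]
      norm_num
    · rw [hT0, hTn (n + 1) (by omega)]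
      simp only [ContinuousLinearMap.sub_apply, ContinuousLinearMap.smul_apply,
        ContinuousLinearMap.id_apply, hP, inner_add_left, inner_add_right,
        inner_smul_left, inner_smul_right, inner_sub_right, inner_e_e]
      norm_num
    · rw [hTn (m + 1) (by omega), hTn (n + 1) (by omega)]
      simp only [ContinuousLinearMap.sub_apply, ContinuousLinearMap.smul_apply,
        ContinuousLinearMap.id_apply, hP, inner_add_left, inner_add_right,
        inner_smul_left, inner_smul_right, inner_sub_right, inner_e_e]
      norm_num
  have hPP : ∀ x : H, P (P x) = P x := by
    intro x
    have he : ‖e 0‖ = 1 := by rw [e, lp.norm_single (by norm_num)]; simp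
    simp [hP, inner_smul_right, inner_e_e, he]
  -- the two-sided inverse of `1 - c • P`
  have hAB : (ContinuousLinearMap.id ℂ H - c • P) ∘L (ContinuousLinearMap.id ℂ H + d • P)
      = ContinuousLinearMap.id ℂ H := by
    refine ContinuousLinearMap.ext fun x => ?_
    simp only [ContinuousLinearMap.comp_apply, ContinuousLinearMap.add_apply,
      ContinuousLinearMap.sub_apply, ContinuousLinearMap.smul_apply,
      ContinuousLinearMap.id_apply, map_add, map_smul, hPP]
    match_scalars
    · ring
    · linear_combination hd
  have hBA : (ContinuousLinearMap.id ℂ H + d • P) ∘L (ContinuousLinearMap.id ℂ H - c • P)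
      = ContinuousLinearMap.id ℂ H := by
    refine ContinuousLinearMap.ext fun x => ?_
    simp only [ContinuousLinearMap.comp_apply, ContinuousLinearMap.add_apply,
      ContinuousLinearMap.sub_apply, ContinuousLinearMap.smul_apply,
      ContinuousLinearMap.id_apply, map_sub, map_smul, hPP]
    match_scalars
    · ring
    · linear_combination hd
  have hone : (1 : H →L[ℂ] H) = ContinuousLinearMap.id ℂ H := rfl
  refine ⟨⟨⟨ContinuousLinearMap.adjoint T ∘L T, ContinuousLinearMap.id ℂ H + d • P, ?_, ?_⟩, rfl⟩,
    ?_, ?_⟩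
  · show (ContinuousLinearMap.adjoint T ∘L T) ∘L (ContinuousLinearMap.id ℂ H + d • P) = 1
    rw [key, hAB, hone]
  · show (ContinuousLinearMap.id ℂ H + d • P) ∘L (ContinuousLinearMap.adjoint T ∘L T) = 1
    rw [key, hBA, hone]
  all_goals {
    have hL : ((ContinuousLinearMap.id ℂ H + d • P) ∘L ContinuousLinearMap.adjoint T) ∘L T
        = ContinuousLinearMap.id ℂ H := by
      rw [ContinuousLinearMap.comp_assoc, key, hBA]
    first
    | exact ⟨_, hL⟩
    | · set L : H →L[ℂ] H := (ContinuousLinearMap.id ℂ H + d • P) ∘L ContinuousLinearMap.adjoint T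
          with hL_def
        have hLid : ∀ x : H, L (T x) = x := fun x => by
          rw [← ContinuousLinearMap.comp_apply, hL]; rfl
        have he0 : (e 0 : H) ≠ 0 := by
          intro h
          have h0 := e_apply 0 0
          rw [h] at h0
          simp at h0
        have hLne : L ≠ 0 := by
          intro h
          apply he0
          rw [← hLid (e 0), h]
          simp
        have hLpos : (0 : ℝ) < ‖L‖ := norm_pos_iff.mpr hLne
        refine ⟨‖L‖⁻¹, by positivity, fun x => ?_⟩
        rw [inv_mul_le_iff₀ hLpos]
        calc ‖x‖ = ‖L (T x)‖ := by rw [hLid]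
          _ ≤ ‖L‖ * ‖T x‖ := L.le_opNorm (T x)
  }

end
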